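/- Let λ ∈ (0,1), let φ: ℝ → ℝ be differentiable with group delay τ_A(ω) = −φ'(ω) ≥ 0, and define G(ω) = (1−λ) + λ e^{jφ(ω)}. Then whenever G(ω) ≠ 0, the group delay of G satisfies τ_G(ω) = λ(λ + (1−λ)cos φ(ω)) / (λ² + (1−λ)² + 2λ(1−λ)cos φ(ω)) · τ_A(ω). -/

import Mathlib

theorem stmt10 (lam : ℝ) (hlam : lam ∈ Set.Ioo (0 : ℝ) 1)
    (φ φ' ψ ψ' : ℝ → ℝ)
    (hφ : ∀ ω, HasDerivAt φ (φ' ω) ω)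
    (hτA : ∀ ω, 0 ≤ -φ' ω)
    (G : ℝ → ℂ)
    (hG : ∀ ω, G ω = ((1 - lam : ℝ) : ℂ) + (lam : ℂ) * Complex.exp (Complex.I * (φ ω : ℂ)))
    (hψ : ∀ ω, HasDerivAt ψ (ψ' ω) ω)
    (hrep : ∀ ω, G ω = ((‖G ω‖ : ℝ) : ℂ) * Complex.exp (Complex.I * (ψ ω : ℂ))) :
    ∀ ω : ℝ, G ω ≠ 0 →
      -ψ' ω =
        lam * (lam + (1 - lam) * Real.cos (φ ω)) /
          (lam^2 + (1 - lam)^2 + 2*lam*(1 - lam)*Real.cos (φ ω)) * (-φ' ω) := by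
  intro ω hGne
  set c := Real.cos (φ ω) with hc
  set s := Real.sin (φ ω) with hs
  set r := ‖G ω‖ with hrdef
  have hr : 0 < r := by
    simpa [hrdef] using (norm_pos_iff.mpr hGne)
  have hGre : (G ω).re = 1 - lam + lam * c := by
    rw [hG ω]; simp [mul_comm Complex.I, hc]
  have hGim : (G ω).im = lam * s := by
    rw [hG ω]; simp [mul_comm Complex.I, hs]
  -- derivative of G
  have hG' : HasDerivAt G ((lam : ℂ) * (Complex.exp (Complex.I * (φ ω : ℂ)) * (Complex.I * (φ' ω : ℂ)))) ω := by
    have h1 : HasDerivAt (fun t : ℝ => Complex.I * (φ t : ℂ)) (Complex.I * (φ' ω : ℂ)) ω :=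
      ((hφ ω).ofReal_comp).const_mul Complex.I
    have h2 := (h1.cexp.const_mul (lam : ℂ)).const_add ((1 - lam : ℝ) : ℂ)
    have hfun : G = fun t => ((1 - lam : ℝ) : ℂ) + (lam : ℂ) * Complex.exp (Complex.I * (φ t : ℂ)) :=
      funext hG
    rw [hfun]
    exact h2
  -- F = G * exp(-Iψ) is real-valued (equal to abs ∘ G)
  have hE : HasDerivAt (fun t : ℝ => Complex.exp (-(Complex.I * (ψ t : ℂ))))
      (Complex.exp (-(Complex.I * (ψ ω : ℂ))) * (-(Complex.I * (ψ' ω : ℂ)))) ω :=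
    (((hψ ω).ofReal_comp).const_mul Complex.I).neg.cexp
  have hF' := hG'.mul hE
  have hFval : (fun t : ℝ => (G t * Complex.exp (-(Complex.I * (ψ t : ℂ)))).im) = fun _ => (0 : ℝ) := by
    funext t
    rw [hrep t, mul_assoc, ← Complex.exp_add]
    simp
  have him := (Complex.imCLM.hasFDerivAt.comp_hasDerivAt ω hF')
  set a := Real.cos (ψ ω) with ha
  set b := Real.sin (ψ ω) with hb
  have hEre : (Complex.exp (-(Complex.I * (ψ ω : ℂ)))).re = a := by
    simp [Complex.exp_re, ha]
  have hEim : (Complex.exp (-(Complex.I * (ψ ω : ℂ)))).im = -b := by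
    simp [Complex.exp_im, hb]
  have hra : r * a = 1 - lam + lam * c := by
    rw [← hGre]; conv_rhs => rw [hrep ω]
    simp [Complex.exp_re, ha, hrdef]
  have hrb : r * b = lam * s := by
    rw [← hGim]; conv_rhs => rw [hrep ω]
    simp [Complex.exp_im, hb, hrdef]
  have hφre : (Complex.exp (Complex.I * (φ ω : ℂ))).re = c := by
    simp [Complex.exp_re, hc]
  have hφim : (Complex.exp (Complex.I * (φ ω : ℂ))).im = s := by
    simp [Complex.exp_im, hs]
  have him2 := him.congr_of_eventuallyEq
    (Filter.Eventually.of_forall fun t => (congrFun hFval t).symm)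
  have hzero := him2.unique (hasDerivAt_const ω 0)
  simp only [Complex.imCLM_apply, Complex.add_im, Complex.mul_im, Complex.mul_re,
    Complex.neg_re, Complex.neg_im, Complex.I_re, Complex.I_im,
    Complex.ofReal_re, Complex.ofReal_im,
    hEre, hEim, hφre, hφim, hGre, hGim] at hzero
  ring_nf at hzero
  -- algebraic consequences
  have hpy1 : s ^ 2 + c ^ 2 = 1 := by
    simpa [hs, hc] using Real.sin_sq_add_cos_sq (φ ω)
  have hr2 : r ^ 2 = (1 - lam + lam * c) ^ 2 + (lam * s) ^ 2 := by
    rw [hrdef, Complex.sq_norm, Complex.normSq_apply, hGre, hGim]; ring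
  have e1 : lam * φ' ω * (c * (r * a) + s * (r * b))
      = ψ' ω * ((1 - lam + lam * c) * (r * a) + lam * s * (r * b)) := by
    linear_combination r * hzero
  rw [hra, hrb] at e1
  have key : ψ' ω * r ^ 2 = lam * φ' ω * (lam + (1 - lam) * c) := by
    rw [hr2]
    linear_combination -e1 + lam ^ 2 * φ' ω * hpy1
  have hD : lam ^ 2 + (1 - lam) ^ 2 + 2 * lam * (1 - lam) * c = r ^ 2 := by
    rw [hr2]
    linear_combination (-lam ^ 2) * hpy1
  have hDne : lam ^ 2 + (1 - lam) ^ 2 + 2 * lam * (1 - lam) * c ≠ 0 := by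
    rw [hD]; exact pow_ne_zero 2 hr.ne'
  rw [div_mul_eq_mul_div, eq_div_iff hDne, hD]
  linear_combination -key
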